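/- For an odd prime p and any unit vector |φ⟩ ∈ C^p, the sum of fourth powers of overlaps with all p+1 mutually unbiased stabilizer bases equals 2: Σ_{V∈Z_p} |⟨V|φ⟩|⁴ + Σ_{B∈Z_p} Σ_{V∈Z_p} |⟨ψ_B^V|φ⟩|⁴ = 2. -/

import Mathlib

open Complex Matrix BigOperators Finset
open scoped Kronecker

noncomputable section

/-- Additive character `a ↦ exp(2πi a/p)` on `ZMod p`. -/
def chi (p : ℕ) (a : ZMod p) : ℂ := Complex.exp (2 * Real.pi * Complex.I * (a.val : ℂ) / p)

/-- The shift operator `X : |j⟩ ↦ |j+1⟩`. -/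
def Xop (p : ℕ) : Matrix (ZMod p) (ZMod p) ℂ := fun j k => if j = k + 1 then 1 else 0

/-- The clock operator `Z : |j⟩ ↦ ω^j |j⟩`. -/
def Zop (p : ℕ) : Matrix (ZMod p) (ZMod p) ℂ := Matrix.diagonal (fun j => chi p j)

/-- Weyl-Heisenberg displacement operator `D_(x|z) = ω^{2⁻¹ x z} X^x Z^z`. -/
def Dop (p : ℕ) [NeZero p] (x z : ZMod p) : Matrix (ZMod p) (ZMod p) ℂ :=
  chi p ((2 : ZMod p)⁻¹ * x * z) • (Xop p ^ x.val * Zop p ^ z.val)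

/-- The stabilizer MUB vector `|ψ_B^V⟩ = p^{-1/2} Σ_k ω^{2⁻¹ B k² - V k} |k⟩`. -/
def psi (p : ℕ) (B V : ZMod p) : ZMod p → ℂ :=
  fun k => ((Real.sqrt p : ℂ))⁻¹ * chi p ((2 : ZMod p)⁻¹ * B * k ^ 2 - V * k)

/-- The magic state `|f_{a,b,c}⟩ = p^{-1/2} Σ_k ω^{a k³ + b k² + c k} |k⟩`. -/
def magic (p : ℕ) (a b c : ZMod p) : ZMod p → ℂ :=
  fun k => ((Real.sqrt p : ℂ))⁻¹ * chi p (a * k ^ 3 + b * k ^ 2 + c * k)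

/-- Rank-one projector `|v⟩⟨v|`. -/
def proj (p : ℕ) (v : ZMod p → ℂ) : Matrix (ZMod p) (ZMod p) ℂ :=
  fun i j => v i * (starRingEnd ℂ) (v j)

/-- The single-qudit operator `S = Σ_B |ψ_B^{-B(B+2⁻¹)}⟩⟨ψ_B^{-B(B+2⁻¹)}|`. -/
def Sop (p : ℕ) [NeZero p] : Matrix (ZMod p) (ZMod p) ℂ :=
  ∑ B : ZMod p, proj p (psi p B (-B * (B + (2 : ZMod p)⁻¹)))


section AuxStmt15

lemma chi_eq' (p : ℕ) [NeZero p] (a : ZMod p) : chi p a = ZMod.stdAddChar a := by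
  rw [ZMod.stdAddChar_apply, ZMod.toCircle_apply, chi]

lemma chi_add' (p : ℕ) [NeZero p] (a b : ZMod p) : chi p (a + b) = chi p a * chi p b := by
  simp [chi_eq', AddChar.map_add_eq_mul]

lemma chi_conj' (p : ℕ) [NeZero p] (a : ZMod p) :
    (starRingEnd ℂ) (chi p a) = chi p (-a) := by
  rw [chi_eq', chi_eq', ZMod.stdAddChar_apply, ZMod.stdAddChar_apply, AddChar.map_neg_eq_inv,
    ← Circle.coe_inv_eq_conj, Circle.coe_inv]

lemma chi_sum' (p : ℕ) [Fact p.Prime] (a : ZMod p) :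
    ∑ V : ZMod p, chi p (V * a) = if a = 0 then (p : ℂ) else 0 := by
  simp only [chi_eq']
  rw [AddChar.sum_mulShift a (ZMod.isPrimitive_stdAddChar p)]
  simp [ZMod.card]

lemma expand' (p : ℕ) [Fact p.Prime] (φ : ZMod p → ℂ) (B V : ZMod p) :
    ((∑ k : ZMod p, (starRingEnd ℂ) (psi p B V k) * φ k) *
      (starRingEnd ℂ) (∑ k : ZMod p, (starRingEnd ℂ) (psi p B V k) * φ k)) ^ 2 =
    ∑ k : ZMod p, ∑ m : ZMod p, ∑ l : ZMod p, ∑ n : ZMod p,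
      ((p : ℂ)⁻¹ * (p : ℂ)⁻¹ * (φ k * (starRingEnd ℂ) (φ l) * (φ m * (starRingEnd ℂ) (φ n))) *
        chi p (B * ((2 : ZMod p)⁻¹ * (l ^ 2 + n ^ 2 - k ^ 2 - m ^ 2)))) *
        chi p (V * (k + m - l - n)) := by
  have hp0 : (0:ℝ) ≤ (p:ℝ) := by positivity
  set r : ℂ := ((Real.sqrt p : ℂ)) with hr
  have hr2 : r * r = (p : ℂ) := by
    rw [hr, ← Complex.ofReal_mul, Real.mul_self_sqrt hp0]; norm_cast
  have hS : (∑ k : ZMod p, (starRingEnd ℂ) (psi p B V k) * φ k)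
      = r⁻¹ * ∑ k : ZMod p, chi p (V * k - (2 : ZMod p)⁻¹ * B * k ^ 2) * φ k := by
    rw [Finset.mul_sum]
    refine Finset.sum_congr rfl fun k _ => ?_
    unfold psi
    simp only [_root_.map_mul, map_inv₀, Complex.conj_ofReal, chi_conj', neg_sub]
    ring
  have hSc : (starRingEnd ℂ) (∑ k : ZMod p, (starRingEnd ℂ) (psi p B V k) * φ k)
      = r⁻¹ * ∑ l : ZMod p, chi p ((2 : ZMod p)⁻¹ * B * l ^ 2 - V * l) * (starRingEnd ℂ) (φ l) := by
    rw [map_sum, Finset.mul_sum]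
    refine Finset.sum_congr rfl fun l _ => ?_
    unfold psi
    simp only [_root_.map_mul, map_inv₀, Complex.conj_ofReal, Complex.conj_conj, chi_conj', neg_sub]
    ring
  rw [hSc, hS]
  have hAC : ∀ X Y : ℂ, ((r⁻¹ * X) * (r⁻¹ * Y)) ^ 2 = (p:ℂ)⁻¹ * (p:ℂ)⁻¹ * (X * Y * (X * Y)) := by
    intro X Y; rw [← hr2]; ring
  rw [hAC]
  rw [Finset.sum_mul_sum]
  rw [Finset.sum_mul_sum]
  simp only [Finset.mul_sum, Finset.sum_mul]
  refine Finset.sum_congr rfl fun k _ => Finset.sum_congr rfl fun m _ =>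
    Finset.sum_congr rfl fun l _ => Finset.sum_congr rfl fun n _ => ?_
  have h1 : chi p (V*k - (2:ZMod p)⁻¹*B*k^2) * chi p ((2:ZMod p)⁻¹*B*l^2 - V*l) *
      (chi p (V*m - (2:ZMod p)⁻¹*B*m^2) * chi p ((2:ZMod p)⁻¹*B*n^2 - V*n)) =
      chi p (B * ((2:ZMod p)⁻¹*(l^2+n^2-k^2-m^2))) * chi p (V*(k+m-l-n)) := by
    rw [← chi_add', ← chi_add', ← chi_add', ← chi_add']
    congr 1
    ring
  linear_combination ((p:ℂ)⁻¹ * (p:ℂ)⁻¹ * (φ k * (starRingEnd ℂ) (φ l) * (φ m * (starRingEnd ℂ) (φ n)))) * h1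

lemma sum_BV' (p : ℕ) [Fact p.Prime] (w : ℂ) (a c : ZMod p) :
    (∑ B : ZMod p, ∑ V : ZMod p, ((p:ℂ)⁻¹ * (p:ℂ)⁻¹ * w * chi p (B * a)) * chi p (V * c))
      = if a = 0 ∧ c = 0 then w else 0 := by
  have hp : (p:ℂ) ≠ 0 := Nat.cast_ne_zero.2 (Fact.out : p.Prime).ne_zero
  simp only [← Finset.mul_sum, chi_sum', ← Finset.sum_mul]
  split_ifs with h1 h2 h3 <;> simp_all
  have hp' : (p:ℂ) ≠ 0 := Nat.cast_ne_zero.2 hp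
  field_simp

lemma quad' (p : ℕ) [Fact p.Prime] (hp2 : p ≠ 2) (k l m n : ZMod p)
    (h : (2:ZMod p)⁻¹ * (l^2 + n^2 - k^2 - m^2) = 0 ∧ k + m - l - n = 0) :
    (l = k ∧ n = m) ∨ (l = m ∧ n = k) := by
  have h2 : (2 : ZMod p) ≠ 0 := by
    intro h0
    have : ((2:ℕ) : ZMod p) = 0 := by exact_mod_cast h0
    rw [ZMod.natCast_eq_zero_iff] at this
    exact hp2 (((Nat.prime_dvd_prime_iff_eq (Fact.out : p.Prime) Nat.prime_two).mp this))
  have h2i : (2 : ZMod p)⁻¹ ≠ 0 := inv_ne_zero h2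
  obtain ⟨ha, hc⟩ := h
  have hq : l^2 + n^2 - k^2 - m^2 = 0 := by
    rcases mul_eq_zero.mp ha with h' | h'
    · exact absurd h' h2i
    · exact h'
  have hs : k + m = l + n := by linear_combination hc
  have hq' : k^2 + m^2 = l^2 + n^2 := by linear_combination -hq
  have hkm : k * m = l * n := by
    have h22 : (2:ZMod p) * (k*m) = 2 * (l*n) := by linear_combination (k+m+l+n) * hs - hq'
    exact mul_left_cancel₀ h2 h22
  have hfac : (k - l) * (k - n) = 0 := by linear_combination k * hs - hkm
  rcases mul_eq_zero.mp hfac with h' | h'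
  · left
    have hkl : k = l := by linear_combination h'
    exact ⟨hkl.symm, by linear_combination hkl - hs⟩
  · right
    have hkn : k = n := by linear_combination h'
    exact ⟨by linear_combination hkn - hs, hkn.symm⟩

lemma eval1' (p : ℕ) [Fact p.Prime] (φ : ZMod p → ℂ) :
    ∑ k : ZMod p, ∑ m : ZMod p, ∑ l : ZMod p, ∑ n : ZMod p,
    (if (l = k ∧ n = m) then φ k * (starRingEnd ℂ) (φ l) * (φ m * (starRingEnd ℂ) (φ n)) else 0)
    = (∑ k : ZMod p, φ k * (starRingEnd ℂ) (φ k)) * (∑ m : ZMod p, φ m * (starRingEnd ℂ) (φ m)) := by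
  rw [Finset.sum_mul_sum]
  refine Finset.sum_congr rfl fun k _ => Finset.sum_congr rfl fun m _ => ?_
  simp [ite_and, Finset.sum_ite_eq, Finset.sum_ite_eq']

lemma eval2' (p : ℕ) [Fact p.Prime] (φ : ZMod p → ℂ) :
    ∑ k : ZMod p, ∑ m : ZMod p, ∑ l : ZMod p, ∑ n : ZMod p,
    (if (l = m ∧ n = k) then φ k * (starRingEnd ℂ) (φ l) * (φ m * (starRingEnd ℂ) (φ n)) else 0)
    = (∑ k : ZMod p, φ k * (starRingEnd ℂ) (φ k)) * (∑ m : ZMod p, φ m * (starRingEnd ℂ) (φ m)) := by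
  rw [Finset.sum_mul_sum]
  refine Finset.sum_congr rfl fun k _ => Finset.sum_congr rfl fun m _ => ?_
  simp [ite_and, Finset.sum_ite_eq, Finset.sum_ite_eq']
  ring

lemma eval3' (p : ℕ) [Fact p.Prime] (φ : ZMod p → ℂ) :
    ∑ k : ZMod p, ∑ m : ZMod p, ∑ l : ZMod p, ∑ n : ZMod p,
    (if ((l = k ∧ n = m) ∧ (l = m ∧ n = k)) then φ k * (starRingEnd ℂ) (φ l) * (φ m * (starRingEnd ℂ) (φ n)) else 0)
    = ∑ k : ZMod p, (φ k * (starRingEnd ℂ) (φ k))^2 := by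
  refine Finset.sum_congr rfl fun k _ => ?_
  simp [ite_and, Finset.sum_ite_eq, Finset.sum_ite_eq']
  ring

end AuxStmt15

theorem stmt15 (p : ℕ) [Fact p.Prime] (hp2 : p ≠ 2) (φ : ZMod p → ℂ)
    (hφ : ∑ k : ZMod p, ‖φ k‖ ^ 2 = 1) :
    (∑ V : ZMod p, ‖φ V‖ ^ 4) +
      ∑ B : ZMod p, ∑ V : ZMod p,
        ‖∑ k : ZMod p, (starRingEnd ℂ) (psi p B V k) * φ k‖ ^ 4 = 2 := by
  have habs : ∀ z : ℂ, ((‖z‖ : ℂ))^4 = (z * (starRingEnd ℂ) z)^2 := by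
    intro z
    rw [Complex.mul_conj]
    norm_cast
    rw [Complex.normSq_eq_norm_sq]
    ring
  have hφC : ∑ k : ZMod p, φ k * (starRingEnd ℂ) (φ k) = 1 := by
    have h := congrArg (fun x : ℝ => (x : ℂ)) hφ
    push_cast at h
    rw [← h]
    refine Finset.sum_congr rfl fun k _ => ?_
    rw [Complex.mul_conj, Complex.normSq_eq_norm_sq]
    norm_cast
  apply Complex.ofReal_injective
  push_cast
  simp only [habs]
  have hT : (∑ B : ZMod p, ∑ V : ZMod p,
      ((∑ k : ZMod p, (starRingEnd ℂ) (psi p B V k) * φ k) *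
        (starRingEnd ℂ) (∑ k : ZMod p, (starRingEnd ℂ) (psi p B V k) * φ k)) ^ 2)
      = 2 - ∑ V : ZMod p, (φ V * (starRingEnd ℂ) (φ V))^2 := by
    have e1 : ∀ B V : ZMod p,
        ((∑ k : ZMod p, (starRingEnd ℂ) (psi p B V k) * φ k) *
          (starRingEnd ℂ) (∑ k : ZMod p, (starRingEnd ℂ) (psi p B V k) * φ k)) ^ 2
        = ∑ x : (ZMod p × ZMod p) × ZMod p × ZMod p,
          ((p:ℂ)⁻¹ * (p:ℂ)⁻¹ *
            (φ x.1.1 * (starRingEnd ℂ) (φ x.2.1) * (φ x.1.2 * (starRingEnd ℂ) (φ x.2.2))) *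
            chi p (B * ((2:ZMod p)⁻¹ * (x.2.1^2 + x.2.2^2 - x.1.1^2 - x.1.2^2)))) *
            chi p (V * (x.1.1 + x.1.2 - x.2.1 - x.2.2)) := by
      intro B V
      rw [expand' p φ B V]
      simp only [Fintype.sum_prod_type]
    calc (∑ B : ZMod p, ∑ V : ZMod p,
        ((∑ k : ZMod p, (starRingEnd ℂ) (psi p B V k) * φ k) *
          (starRingEnd ℂ) (∑ k : ZMod p, (starRingEnd ℂ) (psi p B V k) * φ k)) ^ 2)
        = ∑ B : ZMod p, ∑ V : ZMod p, ∑ x : (ZMod p × ZMod p) × ZMod p × ZMod p,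
          ((p:ℂ)⁻¹ * (p:ℂ)⁻¹ *
            (φ x.1.1 * (starRingEnd ℂ) (φ x.2.1) * (φ x.1.2 * (starRingEnd ℂ) (φ x.2.2))) *
            chi p (B * ((2:ZMod p)⁻¹ * (x.2.1^2 + x.2.2^2 - x.1.1^2 - x.1.2^2)))) *
            chi p (V * (x.1.1 + x.1.2 - x.2.1 - x.2.2)) :=
        Finset.sum_congr rfl fun B _ => Finset.sum_congr rfl fun V _ => e1 B V
      _ = ∑ B : ZMod p, ∑ x : (ZMod p × ZMod p) × ZMod p × ZMod p, ∑ V : ZMod p,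
          ((p:ℂ)⁻¹ * (p:ℂ)⁻¹ *
            (φ x.1.1 * (starRingEnd ℂ) (φ x.2.1) * (φ x.1.2 * (starRingEnd ℂ) (φ x.2.2))) *
            chi p (B * ((2:ZMod p)⁻¹ * (x.2.1^2 + x.2.2^2 - x.1.1^2 - x.1.2^2)))) *
            chi p (V * (x.1.1 + x.1.2 - x.2.1 - x.2.2)) :=
        Finset.sum_congr rfl fun B _ => Finset.sum_comm
      _ = ∑ x : (ZMod p × ZMod p) × ZMod p × ZMod p, ∑ B : ZMod p, ∑ V : ZMod p,
          ((p:ℂ)⁻¹ * (p:ℂ)⁻¹ *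
            (φ x.1.1 * (starRingEnd ℂ) (φ x.2.1) * (φ x.1.2 * (starRingEnd ℂ) (φ x.2.2))) *
            chi p (B * ((2:ZMod p)⁻¹ * (x.2.1^2 + x.2.2^2 - x.1.1^2 - x.1.2^2)))) *
            chi p (V * (x.1.1 + x.1.2 - x.2.1 - x.2.2)) := Finset.sum_comm
      _ = ∑ x : (ZMod p × ZMod p) × ZMod p × ZMod p,
          (if (2:ZMod p)⁻¹ * (x.2.1^2 + x.2.2^2 - x.1.1^2 - x.1.2^2) = 0 ∧
              x.1.1 + x.1.2 - x.2.1 - x.2.2 = 0 then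
            φ x.1.1 * (starRingEnd ℂ) (φ x.2.1) * (φ x.1.2 * (starRingEnd ℂ) (φ x.2.2)) else 0) :=
        Finset.sum_congr rfl fun x _ => sum_BV' p _ _ _
      _ = ∑ x : (ZMod p × ZMod p) × ZMod p × ZMod p,
          (if (x.2.1 = x.1.1 ∧ x.2.2 = x.1.2) ∨ (x.2.1 = x.1.2 ∧ x.2.2 = x.1.1) then
            φ x.1.1 * (starRingEnd ℂ) (φ x.2.1) * (φ x.1.2 * (starRingEnd ℂ) (φ x.2.2)) else 0) := by
        refine Finset.sum_congr rfl fun x _ => ?_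
        obtain ⟨⟨k, m⟩, l, n⟩ := x
        dsimp only
        refine if_congr ?_ rfl rfl
        constructor
        · exact fun h => quad' p hp2 k l m n h
        · rintro (⟨h1, h2⟩ | ⟨h1, h2⟩) <;> subst h1 <;> subst h2 <;>
            exact ⟨by ring, by ring⟩
      _ = ∑ k : ZMod p, ∑ m : ZMod p, ∑ l : ZMod p, ∑ n : ZMod p,
          (if (l = k ∧ n = m) ∨ (l = m ∧ n = k) then
            φ k * (starRingEnd ℂ) (φ l) * (φ m * (starRingEnd ℂ) (φ n)) else 0) := by
        simp only [Fintype.sum_prod_type]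
      _ = ∑ k : ZMod p, ∑ m : ZMod p, ∑ l : ZMod p, ∑ n : ZMod p,
          ((if (l = k ∧ n = m) then
            φ k * (starRingEnd ℂ) (φ l) * (φ m * (starRingEnd ℂ) (φ n)) else 0) +
          ((if (l = m ∧ n = k) then
            φ k * (starRingEnd ℂ) (φ l) * (φ m * (starRingEnd ℂ) (φ n)) else 0) -
          (if ((l = k ∧ n = m) ∧ (l = m ∧ n = k)) then
            φ k * (starRingEnd ℂ) (φ l) * (φ m * (starRingEnd ℂ) (φ n)) else 0))) := by
        refine Finset.sum_congr rfl fun k _ => Finset.sum_congr rfl fun m _ =>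
          Finset.sum_congr rfl fun l _ => Finset.sum_congr rfl fun n _ => ?_
        by_cases h1 : (l = k ∧ n = m) <;> by_cases h2 : (l = m ∧ n = k) <;> simp [h1, h2]
      _ = 2 - ∑ V : ZMod p, (φ V * (starRingEnd ℂ) (φ V))^2 := by
        simp only [Finset.sum_add_distrib, Finset.sum_sub_distrib]
        rw [eval1' p φ, eval2' p φ, eval3' p φ, hφC]
        ring
  rw [hT]
  ring
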